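/- arXiv:2507.13501 — 5 statements merged into one kernel-verified Lean document; each statement's English description precedes it below -/
import Mathlib

section
/- For S = Ry2 the second Rényi entropy and β > 0, the function F(λ) = λx + (1-λ)y + β⁻¹ log(λ² + (1-λ)²) on [0,1] attains its minimum at an interior point λ_min ∈ (0,1) whenever |y - x| < 2/β, and this minimizer equals λ_min = (1 + u - √(1 - u²))/(2u) where u = β(y - x)/2 (for u ≠ 0; λ_min = 1/2 if u = 0). -/
set_option maxHeartbeats 1600000 in
theorem ry2_interior_minimizer (β : ℝ) (hβ : 0 < β) (x y : ℝ)
    (h : |y - x| < 2 / β) :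
    let F : ℝ → ℝ := fun l => l * x + (1 - l) * y + β⁻¹ * Real.log (l^2 + (1-l)^2)
    let u : ℝ := β * (y - x) / 2
    let lmin : ℝ := if u = 0 then 1/2 else (1 + u - Real.sqrt (1 - u^2)) / (2 * u)
    lmin ∈ Set.Ioo (0:ℝ) 1 ∧ ∀ μ ∈ Set.Icc (0:ℝ) 1, F lmin ≤ F μ := by
  intro F u lmin
  have hudef : u = β * (y - x) / 2 := rfl
  have hFdef : F = fun l => l * x + (1 - l) * y + β⁻¹ * Real.log (l^2 + (1-l)^2) := rfl
  have hldef0 : lmin = if u = 0 then 1/2 else (1 + u - Real.sqrt (1 - u^2)) / (2 * u) := rfl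
  clear_value F lmin u
  have hu : |u| < 1 := by
    have h2 : |y - x| * β < 2 := by
      rwa [lt_div_iff₀ hβ] at h
    have habs : |u| = β * |y - x| / 2 := by
      rw [hudef, abs_div, abs_mul, abs_of_pos hβ]
      norm_num
    rw [habs]
    nlinarith [abs_nonneg (y - x)]
  have hu1 : -1 < u := (abs_lt.mp hu).1
  have hu2 : u < 1 := (abs_lt.mp hu).2
  set r : ℝ := Real.sqrt (1 - u^2) with hrdef
  have hr0 : 0 ≤ r := Real.sqrt_nonneg _
  have hr2 : r^2 = 1 - u^2 := Real.sq_sqrt (by nlinarith)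
  have hldef : lmin = if u = 0 then 1/2 else (1 + u - r) / (2 * u) := hldef0
  have hlmem : 0 < lmin ∧ lmin < 1 := by
    rw [hldef]
    by_cases hu0 : u = 0
    · rw [if_pos hu0]; norm_num
    · rw [if_neg hu0]
      rcases lt_or_gt_of_ne hu0 with hneg | hpos
      · have hA : 1 + u < r := by nlinarith
        have hB : r < 1 - u := by nlinarith
        constructor
        · apply div_pos_of_neg_of_neg <;> linarith
        · rw [div_lt_iff_of_neg (by linarith : 2 * u < 0)]
          linarith
      · have hA : r < 1 + u := by nlinarith
        have hB : 1 - u < r := by nlinarith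
        constructor
        · apply div_pos <;> linarith
        · rw [div_lt_iff₀ (by linarith : 0 < 2 * u)]
          linarith
  have key : 2*u*lmin^2 - 2*(u+1)*lmin + (u+1) = 0 := by
    rw [hldef]
    by_cases hu0 : u = 0
    · rw [if_pos hu0, hu0]; norm_num
    · rw [if_neg hu0]
      field_simp
      nlinarith [hr2]
  have hq : ∀ l : ℝ, (0:ℝ) < l^2 + (1-l)^2 := by
    intro l
    nlinarith [sq_nonneg (2*l - 1)]
  have hF' : ∀ l : ℝ, HasDerivAt F (x - y + β⁻¹ * ((4*l - 2)/(l^2 + (1-l)^2))) l := by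
    intro l
    rw [hFdef]
    have h1 : HasDerivAt (fun l : ℝ => l * x) x l := by
      simpa using (hasDerivAt_id l).mul_const x
    have h1l : HasDerivAt (fun l : ℝ => 1 - l) (-1) l := by
      simpa using (hasDerivAt_const l (1:ℝ)).fun_sub (hasDerivAt_id' l)
    have h2 : HasDerivAt (fun l : ℝ => (1 - l) * y) (-y) l := by
      simpa using h1l.mul_const y
    have ha : HasDerivAt (fun l : ℝ => l^2) (2*l) l := by
      simpa using hasDerivAt_pow 2 l
    have hb : HasDerivAt (fun l : ℝ => (1-l)^2) (2*(1-l)*(-1)) l := by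
      have := h1l.fun_pow 2
      simpa using this
    have h3 : HasDerivAt (fun l : ℝ => l^2 + (1-l)^2) (2*l + 2*(1-l)*(-1)) l := ha.add hb
    have h4 : HasDerivAt (fun l : ℝ => Real.log (l^2 + (1-l)^2))
        ((2*l + 2*(1-l)*(-1))/(l^2+(1-l)^2)) l := h3.log (ne_of_gt (hq l))
    have h5 := (h1.fun_add h2).fun_add (h4.const_mul β⁻¹)
    rw [show x - y + β⁻¹ * ((4*l - 2)/(l^2 + (1-l)^2)) = x + -y + β⁻¹ * ((2*l + 2*(1-l)*(-1))/(l^2+(1-l)^2)) by ring]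
    have := hq l
    exact h5
  have hcont : Continuous F := continuous_iff_continuousAt.mpr fun l => (hF' l).continuousAt
  have hxy : x - y = -(2*u/β) := by
    rw [hudef]; field_simp; ring
  have hanti : AntitoneOn F (Set.Icc 0 lmin) := by
    apply antitoneOn_of_deriv_nonpos (convex_Icc _ _) hcont.continuousOn
    · intro l _
      exact (hF' l).differentiableAt.differentiableWithinAt
    · intro l hl
      rw [interior_Icc] at hl
      rw [(hF' l).deriv]
      have hq' := hq l
      have hfac : 0 ≤ (u+1) - u*(l + lmin) := by
        rcases le_or_gt u 0 with h' | h'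
        · nlinarith [hl.1, hl.2, hlmem.1, hlmem.2]
        · nlinarith [hl.1, hl.2, hlmem.1, hlmem.2]
      have hQ : 2*l - 1 ≤ u * (l^2 + (1-l)^2) := by
        nlinarith [key, mul_nonneg (by linarith [hl.2] : (0:ℝ) ≤ lmin - l) hfac]
      have hdiv : (4*l - 2)/(l^2 + (1-l)^2) ≤ 2*u := by
        rw [div_le_iff₀ hq']
        nlinarith [hQ]
      have hmul : β⁻¹ * ((4*l - 2)/(l^2 + (1-l)^2)) ≤ β⁻¹ * (2*u) :=
        mul_le_mul_of_nonneg_left hdiv (by positivity)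
      have heq : β⁻¹ * (2*u) = 2*u/β := by field_simp
      rw [hxy]
      linarith [hmul, heq.le, heq.ge]
  have hmono : MonotoneOn F (Set.Icc lmin 1) := by
    apply monotoneOn_of_deriv_nonneg (convex_Icc _ _) hcont.continuousOn
    · intro l _
      exact (hF' l).differentiableAt.differentiableWithinAt
    · intro l hl
      rw [interior_Icc] at hl
      rw [(hF' l).deriv]
      have hq' := hq l
      have hfac : 0 ≤ (u+1) - u*(l + lmin) := by
        rcases le_or_gt u 0 with h' | h'
        · nlinarith [hl.1, hl.2, hlmem.1, hlmem.2]
        · nlinarith [hl.1, hl.2, hlmem.1, hlmem.2]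
      have hQ : u * (l^2 + (1-l)^2) ≤ 2*l - 1 := by
        nlinarith [key, mul_nonneg (by linarith [hl.1] : (0:ℝ) ≤ l - lmin) hfac]
      have hdiv : 2*u ≤ (4*l - 2)/(l^2 + (1-l)^2) := by
        rw [le_div_iff₀ hq']
        nlinarith [hQ]
      have hmul : β⁻¹ * (2*u) ≤ β⁻¹ * ((4*l - 2)/(l^2 + (1-l)^2)) :=
        mul_le_mul_of_nonneg_left hdiv (by positivity)
      have heq : β⁻¹ * (2*u) = 2*u/β := by field_simp
      rw [hxy]
      linarith [hmul, heq.le, heq.ge]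
  refine ⟨⟨hlmem.1, hlmem.2⟩, ?_⟩
  intro μ hμ
  rcases le_total μ lmin with hc | hc
  · exact hanti ⟨hμ.1, hc⟩ ⟨hlmem.1.le, le_refl _⟩ hc
  · exact hmono ⟨le_refl _, hlmem.2.le⟩ ⟨hc, hμ.2⟩ hc
end

section
/- For S = Ry2 and β > 0, the successor function Υ(x, β) = min_{λ ∈ [0,1]}(λx + β⁻¹ log(λ² + (1-λ)²)) is strictly increasing on the interval (-2/β, 2/β); in particular it is injective there. -/
noncomputable def succRy2 (β x : ℝ) : ℝ :=
  sInf ((fun l => l * x + β⁻¹ * Real.log (l^2 + (1-l)^2)) '' Set.Icc (0:ℝ) 1)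

theorem succRy2_strictMono (β : ℝ) (hβ : 0 < β) :
    StrictMonoOn (succRy2 β) (Set.Ioo (-(2/β)) (2/β)) := by
  have hpos : ∀ l : ℝ, 0 < l^2 + (1-l)^2 := by
    intro l; nlinarith [sq_nonneg (2*l-1)]
  intro x hx y hy hxy
  set f : ℝ → ℝ → ℝ := fun z l => l * z + β⁻¹ * Real.log (l^2 + (1-l)^2) with hf
  have hcont : ∀ z, ContinuousOn (f z) (Set.Icc 0 1) := by
    intro z
    apply Continuous.continuousOn
    apply Continuous.add
    · exact continuous_id.mul continuous_const
    · exact continuous_const.mul (Continuous.log (by continuity) (fun l => (hpos l).ne'))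
  obtain ⟨l₀, hl₀, hmin⟩ := (isCompact_Icc).exists_isMinOn ⟨0, by norm_num⟩ (hcont y)
  have hne : ((fun l => l * y + β⁻¹ * Real.log (l^2 + (1-l)^2)) '' Set.Icc (0:ℝ) 1).Nonempty :=
    ⟨_, ⟨0, by norm_num, rfl⟩⟩
  have hbdd : ∀ z, BddBelow ((fun l => l * z + β⁻¹ * Real.log (l^2 + (1-l)^2)) '' Set.Icc (0:ℝ) 1) := by
    intro z
    obtain ⟨l₁, hl₁, hmin₁⟩ := (isCompact_Icc).exists_isMinOn ⟨0, by norm_num⟩ (hcont z)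
    exact ⟨f z l₁, by rintro _ ⟨l, hl, rfl⟩; exact hmin₁ hl⟩
  have hval : succRy2 β y = f y l₀ := by
    apply le_antisymm
    · exact csInf_le (hbdd y) ⟨l₀, hl₀, rfl⟩
    · apply le_csInf hne
      rintro _ ⟨l, hl, rfl⟩; exact hmin hl
  have hl0pos : 0 < l₀ := by
    rcases lt_or_eq_of_le hl₀.1 with h | h
    · exact h
    · exfalso
      have hy2 : y < 2/β := hy.2
      set ε := 2/β - y with hε
      clear_value ε
      have hεpos : 0 < ε := by linarith
      set l := min 1 (β*ε/4) with hl
      have h4 : l ≤ β*ε/4 := min_le_right _ _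
      have hlpos : 0 < l := lt_min one_pos (by positivity)
      have hl1 : l ≤ 1 := min_le_left _ _
      clear_value l
      have hlε : 2*l/β ≤ ε/2 := by
        rw [div_le_div_iff₀ hβ (by norm_num : (0:ℝ) < 2)]
        nlinarith
      have hlog : Real.log (l^2 + (1-l)^2) ≤ 2*l^2 - 2*l := by
        have := Real.log_le_sub_one_of_pos (hpos l)
        nlinarith
      have hneg : f y l < 0 := by
        have h1 : f y l ≤ l * y + β⁻¹ * (2*l^2 - 2*l) := by
          have := mul_le_mul_of_nonneg_left hlog (le_of_lt (inv_pos.mpr hβ))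
          simp only [hf]; linarith
        have h2 : l * y + β⁻¹ * (2*l^2 - 2*l) = l * (y - 2/β + 2*l/β) := by
          field_simp; ring
        have h3 : y - 2/β + 2*l/β ≤ -ε/2 := by
          rw [hε] at hlε ⊢; linarith
        calc f y l ≤ l * (y - 2/β + 2*l/β) := by rw [← h2]; exact h1
          _ ≤ l * (-ε/2) := mul_le_mul_of_nonneg_left h3 hlpos.le
          _ < 0 := by nlinarith
      have h0 : f y l₀ = 0 := by
        rw [← h]; simp [hf]
      have hmle : f y l₀ ≤ f y l := hmin (Set.mem_Icc.mpr ⟨hlpos.le, hl1⟩)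
      rw [h0] at hmle
      linarith
  have h1 : succRy2 β x ≤ f x l₀ := csInf_le (hbdd x) ⟨l₀, hl₀, rfl⟩
  have h2 : f x l₀ < f y l₀ := by
    simp only [hf]
    have := mul_lt_mul_of_pos_left hxy hl0pos
    linarith
  rw [hval]; linarith
end

section
/- For |u| < 1 with u ≠ 0, substituting λ = λ_min(u) = (1 + u - √(1-u²))/(2u) into λ·(2u/β) + β⁻¹ log(λ² + (1-λ)²) yields β⁻¹(-1 + u + √(1-u²) + log((1 - √(1-u²))/u²)); that is, Υ(x, β) = β⁻¹(-1 + u + √(1-u²) + log((1 - √(1-u²))/u²)) where u = βx/2 and 0 < |u| < 1. -/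
lemma succRy2_aux (β u s : ℝ) (hβ : 0 < β) (hu0 : u ≠ 0) (hu1 : u^2 < 1)
    (hs2 : s^2 = 1 - u^2) (hs_pos : 0 < s) (hs_lt1 : s < 1) :
    sInf ((fun l => l * (2*u/β) + β⁻¹ * Real.log (l^2 + (1-l)^2)) '' Set.Icc (0:ℝ) 1)
      = β⁻¹ * (-1 + u + s + Real.log ((1 - s)/u^2)) := by
  have hu2pos : 0 < u^2 := by positivity
  obtain ⟨l, hl_eq⟩ : ∃ l : ℝ, 2*u*l = u - 1 + s :=
    ⟨(u - 1 + s) / (2*u), by field_simp⟩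
  set f : ℝ → ℝ := fun l => l * (2*u/β) + β⁻¹ * Real.log (l^2 + (1-l)^2) with hf_def
  have hqpos : ∀ t : ℝ, 0 < t^2 + (1-t)^2 := by
    intro t; nlinarith [sq_nonneg (2*t - 1)]
  -- value of q at l
  have hq_mul : (l^2 + (1-l)^2) * u^2 = 1 - s := by
    linear_combination (u*l + (u-1+s)/2 - u) * hl_eq + (1/2) * hs2
  have hql : l^2 + (1-l)^2 = (1 - s)/u^2 := by
    rw [eq_div_iff (ne_of_gt hu2pos)]; exact hq_mul
  -- l strictly between 0 and 1
  have hprod : 2*(l*(1-l))*u^2 = s*(1-s) := by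
    linear_combination (-1) * hq_mul + hs2
  have hp : 0 < l*(1-l) := by
    nlinarith [mul_pos hs_pos (show (0:ℝ) < 1 - s by linarith), hu2pos]
  have h0l : 0 < l := by nlinarith [hp, sq_nonneg l]
  have h1l : l < 1 := by nlinarith [hp, sq_nonneg (1-l)]
  -- derivative of f
  have hderiv : ∀ t : ℝ, HasDerivAt f (2*u/β + β⁻¹ * ((4*t-2)/(t^2 + (1-t)^2))) t := by
    intro t
    have hq : HasDerivAt (fun t : ℝ => t^2 + (1-t)^2) (4*t-2) t := by
      have h1 : HasDerivAt (fun t : ℝ => t^2) (2 * t^1 * 1) t :=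
        (hasDerivAt_id t).pow 2
      have h2 : HasDerivAt (fun t : ℝ => (1-t)^2) (2 * (1-t)^1 * (0-1)) t :=
        ((hasDerivAt_const t (1:ℝ)).sub (hasDerivAt_id t)).pow 2
      exact (h1.add h2).congr_deriv (by ring)
    have hlog : HasDerivAt (fun t : ℝ => Real.log (t^2 + (1-t)^2))
        ((4*t-2)/(t^2 + (1-t)^2)) t := hq.log (ne_of_gt (hqpos t))
    have h3 : HasDerivAt (fun t : ℝ => t * (2*u/β)) (2*u/β) t := by
      simpa using (hasDerivAt_id t).mul_const (2*u/β)
    exact h3.add (hlog.const_mul β⁻¹)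
  have hcont : Continuous f := by
    rw [continuous_iff_continuousAt]
    exact fun t => (hderiv t).continuousAt
  -- key factorization for derivative sign
  have hkey : ∀ t : ℝ, 2*u*(t^2+(1-t)^2) + (4*t-2) = 2*(t-l)*(2*u*t - u + 1 + s) := by
    intro t
    have hmul : (2*(t-l)*(2*u*t - u + 1 + s))*u = (2*u*(t^2+(1-t)^2) + (4*t-2))*u := by
      linear_combination (-2*u*t + (u-1+s) - 2*s) * hl_eq + (-1) * hs2
    exact (mul_right_cancel₀ hu0 hmul).symm
  have hF : ∀ t ∈ Set.Icc (0:ℝ) 1, 0 < 2*u*t - u + 1 + s := by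
    intro t ht
    rcases le_or_gt 0 u with h | h
    · nlinarith [ht.1]
    · nlinarith [ht.2]
  have hderiv_eq : ∀ t : ℝ, deriv f t = 2*u/β + β⁻¹ * ((4*t-2)/(t^2 + (1-t)^2)) :=
    fun t => (hderiv t).deriv
  -- derivative sign rewrite
  have hsign : ∀ t : ℝ, deriv f t
      = β⁻¹ * ((2*u*(t^2+(1-t)^2) + (4*t-2))/(t^2+(1-t)^2)) := by
    intro t
    rw [hderiv_eq t]
    have := ne_of_gt (hqpos t)
    field_simp
  -- monotone on [l,1]
  have hmono : MonotoneOn f (Set.Icc l 1) := by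
    apply monotoneOn_of_deriv_nonneg (convex_Icc l 1) hcont.continuousOn
    · exact fun t _ => (hderiv t).differentiableAt.differentiableWithinAt
    · intro t ht
      rw [interior_Icc] at ht
      rw [hsign t]
      have hN : 0 ≤ 2*u*(t^2+(1-t)^2) + (4*t-2) := by
        rw [hkey t]
        have h1 : (0:ℝ) ≤ t - l := by linarith [ht.1]
        have h2 := hF t ⟨le_trans h0l.le ht.1.le, ht.2.le⟩
        positivity
      have := hqpos t
      positivity
  -- antitone on [0,l]
  have hanti : AntitoneOn f (Set.Icc 0 l) := by
    apply antitoneOn_of_deriv_nonpos (convex_Icc 0 l) hcont.continuousOn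
    · exact fun t _ => (hderiv t).differentiableAt.differentiableWithinAt
    · intro t ht
      rw [interior_Icc] at ht
      rw [hsign t]
      have hF' : 0 < 2*u*t - u + 1 + s := hF t ⟨ht.1.le, le_trans ht.2.le h1l.le⟩
      have hN : 2*u*(t^2+(1-t)^2) + (4*t-2) ≤ 0 := by
        rw [hkey t]
        nlinarith [ht.2]
      have hq := hqpos t
      have hdiv : (2*u*(t^2+(1-t)^2) + (4*t-2))/(t^2+(1-t)^2) ≤ 0 :=
        div_nonpos_of_nonpos_of_nonneg hN hq.le
      have hβi : (0:ℝ) ≤ β⁻¹ := by positivity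
      exact mul_nonpos_of_nonneg_of_nonpos hβi hdiv
  -- value at l
  have hval : f l = β⁻¹ * (-1 + u + s + Real.log ((1 - s)/u^2)) := by
    have hlx : l * (2*u/β) = β⁻¹ * (-1 + u + s) := by
      field_simp
      linear_combination hl_eq
    rw [hf_def]
    simp only
    rw [hql, hlx]
    ring
  -- minimum property
  have hmin : ∀ t ∈ Set.Icc (0:ℝ) 1, f l ≤ f t := by
    intro t ht
    rcases le_total t l with h | h
    · exact hanti ⟨ht.1, h⟩ ⟨h0l.le, le_refl l⟩ h
    · exact hmono ⟨le_refl l, h1l.le⟩ ⟨h, ht.2⟩ h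
  have hmem : l ∈ Set.Icc (0:ℝ) 1 := ⟨h0l.le, h1l.le⟩
  rw [← hval]
  apply le_antisymm
  · exact csInf_le ⟨f l, fun y ⟨t, ht, hy⟩ => hy ▸ hmin t ht⟩ ⟨l, hmem, rfl⟩
  · exact le_csInf ⟨f l, ⟨l, hmem, rfl⟩⟩ (fun y ⟨t, ht, hy⟩ => hy ▸ hmin t ht)

theorem succRy2_closed_form (β : ℝ) (hβ : 0 < β) (x : ℝ)
    (hx0 : x ≠ 0) (hx : |x| < 2 / β) :
    succRy2 β x =
      β⁻¹ * (-1 + (β * x / 2) + Real.sqrt (1 - (β * x / 2)^2) +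
        Real.log ((1 - Real.sqrt (1 - (β * x / 2)^2)) / (β * x / 2)^2)) := by
  obtain ⟨u, hu⟩ : ∃ u : ℝ, β * x / 2 = u := ⟨_, rfl⟩
  have hu0 : u ≠ 0 := by
    rw [← hu]; positivity
  have hu1 : u^2 < 1 := by
    have habs : |u| < 1 := by
      have h1 : |u| = β * |x| / 2 := by
        rw [← hu, abs_div, abs_mul, abs_of_pos hβ]; norm_num
      rw [h1]
      rw [lt_div_iff₀ hβ] at hx
      nlinarith
    nlinarith [abs_nonneg u, sq_abs u]
  obtain ⟨s, hs⟩ : ∃ s : ℝ, Real.sqrt (1 - u^2) = s := ⟨_, rfl⟩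
  have hs2 : s^2 = 1 - u^2 := by rw [← hs]; exact Real.sq_sqrt (by nlinarith)
  have hs_pos : 0 < s := by rw [← hs]; exact Real.sqrt_pos.2 (by nlinarith)
  have hu2 : 0 < u^2 := by positivity
  have hs_lt1 : s < 1 := by nlinarith
  have hxu : x = 2*u/β := by
    rw [← hu]; field_simp
  rw [hu, hs]
  unfold succRy2
  rw [show (fun l => l * x + β⁻¹ * Real.log (l^2 + (1-l)^2))
      = (fun l => l * (2*u/β) + β⁻¹ * Real.log (l^2 + (1-l)^2)) by
    funext t; rw [← hxu]]
  exact succRy2_aux β u s hβ hu0 hu1 hs2 hs_pos hs_lt1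
end

section
/- For the Shannon entropy S(λ) = -λ log λ - (1-λ) log(1-λ) and β > 0, the thermodynamic addition x ⊕ y = min_{λ∈[0,1]}(λx + (1-λ)y - β⁻¹S(λ)) has the closed form x ⊕ y = -β⁻¹ log(e^{-βx} + e^{-βy}), and in particular is associative. -/
noncomputable def shannon (l : ℝ) : ℝ := -l * Real.log l - (1 - l) * Real.log (1 - l)

noncomputable def taddSh (β x y : ℝ) : ℝ :=
  sInf ((fun l => l * x + (1 - l) * y - β⁻¹ * shannon l) '' Set.Icc (0:ℝ) 1)

theorem taddSh_closed_form_and_assoc (β : ℝ) (hβ : 0 < β) :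
    (∀ x y : ℝ, taddSh β x y = -β⁻¹ * Real.log (Real.exp (-β * x) + Real.exp (-β * y))) ∧
    (∀ x y z : ℝ, taddSh β (taddSh β x y) z = taddSh β x (taddSh β y z)) := by
  have hβ' : (0:ℝ) < β⁻¹ := inv_pos.mpr hβ
  have hββ : β⁻¹ * β = 1 := inv_mul_cancel₀ hβ.ne'
  have key : ∀ x y : ℝ, taddSh β x y
      = -β⁻¹ * Real.log (Real.exp (-β * x) + Real.exp (-β * y)) := by
    intro x y
    set A := Real.exp (-β * x) with hAdef
    set B := Real.exp (-β * y) with hBdef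
    have hA : 0 < A := Real.exp_pos _
    have hB : 0 < B := Real.exp_pos _
    have hAB : 0 < A + B := by linarith
    set L := Real.log (A + B) with hLdef
    have hlogA : Real.log A = -β * x := Real.log_exp _
    have hlogB : Real.log B = -β * y := Real.log_exp _
    set p := A / (A + B) with hpdef
    have hp0 : 0 < p := div_pos hA hAB
    have hp1' : 1 - p = B / (A + B) := by rw [hpdef]; field_simp; ring
    have hp1 : p < 1 := by
      have : 0 < B / (A + B) := div_pos hB hAB
      linarith [hp1'.symm ▸ this]
    have hlogp : Real.log p = -β * x - L := by
      rw [hpdef, Real.log_div hA.ne' hAB.ne', hlogA]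
    have hlogq : Real.log (1 - p) = -β * y - L := by
      rw [hp1', Real.log_div hB.ne' hAB.ne', hlogB]
    -- lower bound
    have hlb : ∀ l ∈ Set.Icc (0:ℝ) 1,
        -β⁻¹ * L ≤ l * x + (1 - l) * y - β⁻¹ * shannon l := by
      rintro l ⟨hl0, hl1⟩
      rcases eq_or_lt_of_le hl0 with h0 | h0
      · -- l = 0
        have : shannon l = 0 := by
          simp [shannon, ← h0]
        rw [this]
        have hLy : -β * y ≤ L := by
          rw [← hlogB]; exact Real.log_le_log hB (by linarith)
        rw [← h0]
        have hy : β⁻¹ * (-β * y) = -y := by field_simp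
        have := mul_le_mul_of_nonneg_left hLy hβ'.le
        rw [hy] at this
        nlinarith
      rcases eq_or_lt_of_le hl1 with h1 | h1
      · -- l = 1
        have : shannon l = 0 := by
          simp [shannon, h1]
        rw [this, h1]
        have hLx : -β * x ≤ L := by
          rw [← hlogA]; exact Real.log_le_log hA (by linarith)
        have hx : β⁻¹ * (-β * x) = -x := by field_simp
        have := mul_le_mul_of_nonneg_left hLx hβ'.le
        rw [hx] at this
        nlinarith
      · -- 0 < l < 1
        have hll : 0 < 1 - l := by linarith
        have g1 : Real.log (p / l) ≤ p / l - 1 :=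
          Real.log_le_sub_one_of_pos (div_pos hp0 h0)
        have g2 : Real.log ((1 - p) / (1 - l)) ≤ (1 - p) / (1 - l) - 1 :=
          Real.log_le_sub_one_of_pos (div_pos (by linarith) hll)
        rw [Real.log_div hp0.ne' h0.ne'] at g1
        rw [Real.log_div (by linarith : (0:ℝ) < 1 - p).ne' hll.ne'] at g2
        have g1' : l * (Real.log p - Real.log l) ≤ p - l := by
          have := mul_le_mul_of_nonneg_left g1 h0.le
          calc l * (Real.log p - Real.log l) ≤ l * (p / l - 1) := this
            _ = p - l := by field_simp
        have g2' : (1 - l) * (Real.log (1 - p) - Real.log (1 - l)) ≤ (1 - p) - (1 - l) := by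
          have := mul_le_mul_of_nonneg_left g2 hll.le
          calc (1 - l) * (Real.log (1 - p) - Real.log (1 - l))
              ≤ (1 - l) * ((1 - p) / (1 - l) - 1) := this
            _ = (1 - p) - (1 - l) := by field_simp
        have hS : shannon l ≤ β * (l * x) + β * ((1 - l) * y) + L := by
          have h3 : l * Real.log p + (1 - l) * Real.log (1 - p) + shannon l ≤ 0 := by
            unfold shannon; nlinarith
          rw [hlogp, hlogq] at h3
          nlinarith
        have h2 : β⁻¹ * (β * (l * x) + β * ((1 - l) * y) + L)
            = l * x + (1 - l) * y + β⁻¹ * L := by field_simp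
        have h3 := mul_le_mul_of_nonneg_left hS hβ'.le
        rw [h2] at h3
        linarith
    -- value attained at p
    have hval : p * x + (1 - p) * y - β⁻¹ * shannon p = -β⁻¹ * L := by
      have hS : shannon p = β * (p * x) + β * ((1 - p) * y) + L := by
        unfold shannon; rw [hlogp, hlogq]; ring
      rw [hS]; field_simp; ring
    have hmem : -β⁻¹ * L ∈
        ((fun l => l * x + (1 - l) * y - β⁻¹ * shannon l) '' Set.Icc (0:ℝ) 1) :=
      ⟨p, ⟨hp0.le, hp1.le⟩, hval⟩
    have hbdd : BddBelow ((fun l => l * x + (1 - l) * y - β⁻¹ * shannon l) '' Set.Icc (0:ℝ) 1) := by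
      refine ⟨-β⁻¹ * L, ?_⟩
      rintro v ⟨l, hl, rfl⟩
      exact hlb l hl
    refine le_antisymm (csInf_le hbdd hmem) (le_csInf ⟨_, hmem⟩ ?_)
    rintro v ⟨l, hl, rfl⟩
    exact hlb l hl
  refine ⟨key, ?_⟩
  intro x y z
  have hexp : ∀ w : ℝ, Real.exp (-β * (-β⁻¹ * Real.log w)) = w → True := fun _ _ => trivial
  have hE : ∀ u v : ℝ,
      Real.exp (-β * (-β⁻¹ * Real.log (Real.exp (-β * u) + Real.exp (-β * v))))
        = Real.exp (-β * u) + Real.exp (-β * v) := by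
    intro u v
    have h : -β * (-β⁻¹ * Real.log (Real.exp (-β * u) + Real.exp (-β * v)))
        = Real.log (Real.exp (-β * u) + Real.exp (-β * v)) := by
      field_simp
    rw [h, Real.exp_log (by positivity)]
  rw [key, key, key, key, hE, hE]
  rw [add_assoc]
end

section
/- For S = Ry2 and β > 0, the thermodynamic addition ⊕ on ℝ is not associative: there exist x, y, z ∈ ℝ with (x ⊕ y) ⊕ z ≠ x ⊕ (y ⊕ z). -/
noncomputable def taddRy2 (β x y : ℝ) : ℝ :=
  sInf ((fun l => l * x + (1 - l) * y + β⁻¹ * Real.log (l^2 + (1-l)^2)) '' Set.Icc (0:ℝ) 1)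

lemma taddRy2_arg_pos (l : ℝ) : 0 < l^2 + (1-l)^2 := by nlinarith [sq_nonneg (2*l - 1)]

/-- Key inequality: `log (l² + (1-l)²) ≥ -2l` for `l ≥ 0`. -/
lemma taddRy2_key (l : ℝ) (hl : 0 ≤ l) : -(2*l) ≤ Real.log (l^2 + (1-l)^2) := by
  rw [Real.le_log_iff_exp_le (taddRy2_arg_pos l)]
  have h1 : 1 + 2*l + 2*l^2 ≤ Real.exp (2*l) := by
    have := Real.quadratic_le_exp_of_nonneg (x := 2*l) (by linarith)
    nlinarith [this]
  rw [Real.exp_neg, inv_eq_one_div, div_le_iff₀ (Real.exp_pos _)]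
  have hnn : 0 ≤ l^2 + (1-l)^2 := (taddRy2_arg_pos l).le
  calc (1:ℝ) ≤ (l^2 + (1-l)^2) * (1 + 2*l + 2*l^2) := by nlinarith [sq_nonneg l, sq_nonneg (l*l)]
    _ ≤ (l^2 + (1-l)^2) * Real.exp (2*l) := by
        exact mul_le_mul_of_nonneg_left h1 hnn

/-- Lower bound `log (l² + (1-l)²) ≥ log (1/2)` . -/
lemma taddRy2_half (l : ℝ) : Real.log (1/2) ≤ Real.log (l^2 + (1-l)^2) := by
  rw [Real.log_le_log_iff (by norm_num) (taddRy2_arg_pos l)]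
  nlinarith [sq_nonneg (2*l - 1)]

lemma taddRy2_nonempty (β x y : ℝ) :
    ((fun l => l * x + (1 - l) * y + β⁻¹ * Real.log (l^2 + (1-l)^2)) ''
      Set.Icc (0:ℝ) 1).Nonempty :=
  ⟨_, ⟨0, by norm_num, rfl⟩⟩

lemma taddRy2_bddBelow (β x y : ℝ) (hβ : 0 < β) :
    BddBelow ((fun l => l * x + (1 - l) * y + β⁻¹ * Real.log (l^2 + (1-l)^2)) ''
      Set.Icc (0:ℝ) 1) := by
  refine ⟨min x y - β⁻¹ * Real.log 2, ?_⟩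
  rintro a ⟨l, ⟨hl0, hl1⟩, rfl⟩
  have h1 : min x y ≤ l * x + (1 - l) * y := by
    have hx := min_le_left x y
    have hy := min_le_right x y
    nlinarith
  have h2 : -Real.log 2 ≤ Real.log (l^2 + (1-l)^2) := by
    have := taddRy2_half l
    rw [show (1:ℝ)/2 = 2⁻¹ by norm_num, Real.log_inv] at this
    linarith
  have h3 : β⁻¹ * (-Real.log 2) ≤ β⁻¹ * Real.log (l^2 + (1-l)^2) :=
    mul_le_mul_of_nonneg_left h2 (by positivity)
  simp only
  nlinarith

lemma taddRy2_zero_zero (β : ℝ) (hβ : 0 < β) : taddRy2 β 0 0 = -(β⁻¹ * Real.log 2) := by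
  unfold taddRy2
  apply le_antisymm
  · apply csInf_le (taddRy2_bddBelow β 0 0 hβ)
    refine ⟨1/2, ⟨by norm_num, by norm_num⟩, ?_⟩
    have : ((1:ℝ)/2)^2 + (1 - 1/2)^2 = 2⁻¹ := by norm_num
    simp only [this, Real.log_inv]
    ring
  · apply le_csInf (taddRy2_nonempty β 0 0)
    rintro a ⟨l, ⟨hl0, hl1⟩, rfl⟩
    have h2 : -Real.log 2 ≤ Real.log (l^2 + (1-l)^2) := by
      have := taddRy2_half l
      rw [show (1:ℝ)/2 = 2⁻¹ by norm_num, Real.log_inv] at this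
      linarith
    have h3 : β⁻¹ * (-Real.log 2) ≤ β⁻¹ * Real.log (l^2 + (1-l)^2) :=
      mul_le_mul_of_nonneg_left h2 (by positivity)
    simp only
    nlinarith

lemma taddRy2_zero_gap (β : ℝ) (hβ : 0 < β) : taddRy2 β 0 (-(2*β⁻¹)) = -(2*β⁻¹) := by
  unfold taddRy2
  apply le_antisymm
  · apply csInf_le (taddRy2_bddBelow β 0 (-(2*β⁻¹)) hβ)
    refine ⟨0, ⟨le_refl 0, by norm_num⟩, ?_⟩
    norm_num
  · apply le_csInf (taddRy2_nonempty β 0 (-(2*β⁻¹)))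
    rintro a ⟨l, ⟨hl0, hl1⟩, rfl⟩
    have h2 : -(2*l) ≤ Real.log (l^2 + (1-l)^2) := taddRy2_key l hl0
    have h3 : β⁻¹ * (-(2*l)) ≤ β⁻¹ * Real.log (l^2 + (1-l)^2) :=
      mul_le_mul_of_nonneg_left h2 (by positivity)
    have hβi : 0 < β⁻¹ := by positivity
    simp only
    nlinarith

theorem taddRy2_not_assoc (β : ℝ) (hβ : 0 < β) :
    ∃ x y z : ℝ, taddRy2 β (taddRy2 β x y) z ≠ taddRy2 β x (taddRy2 β y z) := by
  have hβi : 0 < β⁻¹ := by positivity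
  refine ⟨0, 0, -(2*β⁻¹), ?_⟩
  rw [taddRy2_zero_zero β hβ, taddRy2_zero_gap β hβ, taddRy2_zero_gap β hβ]
  -- now show `taddRy2 β (-(β⁻¹ * log 2)) (-(2*β⁻¹)) ≠ -(2*β⁻¹)`
  apply ne_of_lt
  have hmem : (fun l => l * (-(β⁻¹ * Real.log 2)) + (1 - l) * (-(2*β⁻¹))
      + β⁻¹ * Real.log (l^2 + (1-l)^2)) (1/10)
      ∈ ((fun l => l * (-(β⁻¹ * Real.log 2)) + (1 - l) * (-(2*β⁻¹))
        + β⁻¹ * Real.log (l^2 + (1-l)^2)) '' Set.Icc (0:ℝ) 1) :=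
    ⟨1/10, ⟨by norm_num, by norm_num⟩, rfl⟩
  have hle : taddRy2 β (-(β⁻¹ * Real.log 2)) (-(2*β⁻¹))
      ≤ (1/10) * (-(β⁻¹ * Real.log 2)) + (1 - 1/10) * (-(2*β⁻¹))
        + β⁻¹ * Real.log ((1/10:ℝ)^2 + (1-1/10)^2) :=
    csInf_le (taddRy2_bddBelow β _ _ hβ) hmem
  have harg : ((1/10:ℝ)^2 + (1-1/10)^2) = 41/50 := by norm_num
  rw [harg] at hle
  -- numeric bounds on the logs
  have hlog1 : Real.log (41/50) ≤ -9/50 := by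
    have := Real.log_le_sub_one_of_pos (show (0:ℝ) < 41/50 by norm_num)
    linarith
  have hlog2 : (1:ℝ)/2 ≤ Real.log 2 := by
    have := Real.log_le_sub_one_of_pos (show (0:ℝ) < 2⁻¹ by norm_num)
    rw [Real.log_inv] at this
    linarith
  have : (1/10) * (-(β⁻¹ * Real.log 2)) + (1 - 1/10) * (-(2*β⁻¹))
      + β⁻¹ * Real.log (41/50) < -(2*β⁻¹) := by
    have h1 : β⁻¹ * Real.log (41/50) ≤ β⁻¹ * (-9/50) :=
      mul_le_mul_of_nonneg_left hlog1 hβi.le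
    have h2 : β⁻¹ * (1/2) ≤ β⁻¹ * Real.log 2 :=
      mul_le_mul_of_nonneg_left hlog2 hβi.le
    nlinarith
  linarith
end
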